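/- The ICL recursion θ^t = θ^{t-1} - ((x_tᵀθ^{t-1} - y_t)/‖P_{t-1}x_t‖²)·P_{t-1}x_t with θ^0 = 0 solves, at each t, the problem of minimizing (y_t - x_tᵀθ)² subject to y_i = x_iᵀθ for all i < t; in particular x_tᵀθ^t = y_t and x_iᵀθ^t = y_i for all i < t. -/

import Mathlib

open Matrix

lemma span_dot_zero {d : ℕ} (x : ℕ → Fin d → ℝ) (P : ℕ → Matrix (Fin d) (Fin d) ℝ)
    (hP1 : ∀ t (v : Fin d → ℝ) j, j < t → x j ⬝ᵥ (P t *ᵥ v) = 0)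
    (t : ℕ) (v w : Fin d → ℝ)
    (hw : w ∈ Submodule.span ℝ {u : Fin d → ℝ | ∃ j < t, u = x j}) :
    w ⬝ᵥ (P t *ᵥ v) = 0 := by
  induction hw using Submodule.span_induction with
  | mem u hu => obtain ⟨j, hj, rfl⟩ := hu; exact hP1 t v j hj
  | zero => simp
  | add a b _ _ ha hb => rw [add_dotProduct, ha, hb, add_zero]
  | smul c a _ ha => rw [smul_dotProduct, ha, smul_zero]

/-- The ICL recursion `θ^{t+1} = θ^t - ((x_tᵀθ^t - y_t)/‖P_t x_t‖²)·P_t x_t` with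
`θ^0 = 0`, where `P_t` is the orthogonal projection onto `Span(x_0,...,x_{t-1})^⊥`,
solves at each step the problem of minimizing `(y_t - x_tᵀθ)²` subject to
`x_iᵀθ = y_i` for all `i < t`: in particular `x_tᵀθ^{t+1} = y_t` and
`x_iᵀθ^{t+1} = y_i` for all `i < t`. -/
theorem icl_recursion_solves {d T : ℕ} (x : ℕ → Fin d → ℝ) (y : ℕ → ℝ)
    (hli : LinearIndependent ℝ (fun i : Fin T => x i))
    (θstar : Fin d → ℝ) (hy : ∀ i, y i = x i ⬝ᵥ θstar)
    (P : ℕ → Matrix (Fin d) (Fin d) ℝ)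
    (hP1 : ∀ t (v : Fin d → ℝ) j, j < t → x j ⬝ᵥ (P t *ᵥ v) = 0)
    (hP2 : ∀ t (v : Fin d → ℝ),
      v - P t *ᵥ v ∈ Submodule.span ℝ {u : Fin d → ℝ | ∃ j < t, u = x j})
    (θ : ℕ → Fin d → ℝ) (h0 : θ 0 = 0)
    (hrec : ∀ t < T, θ (t + 1) =
      θ t - ((x t ⬝ᵥ θ t - y t) / ((P t *ᵥ x t) ⬝ᵥ (P t *ᵥ x t))) • (P t *ᵥ x t)) :
    ∀ t < T, ∀ i < t + 1, x i ⬝ᵥ θ (t + 1) = y i := by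
  -- key: for t < T, P t x t ≠ 0
  have hPx : ∀ t < T, (P t *ᵥ x t) ⬝ᵥ (P t *ᵥ x t) ≠ 0 := by
    intro t ht h
    have hz : P t *ᵥ x t = 0 := by
      have := (dotProduct_self_eq_zero (v := P t *ᵥ x t)).mp h
      exact this
    have hx : x t ∈ Submodule.span ℝ {u : Fin d → ℝ | ∃ j < t, u = x j} := by
      have := hP2 t (x t); rwa [hz, sub_zero] at this
    -- contradiction with linear independence
    have hset : {u : Fin d → ℝ | ∃ j < t, u = x j}
        = (fun i : Fin T => x i) '' {i : Fin T | (i : ℕ) < t} := by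
      ext u
      constructor
      · rintro ⟨j, hj, rfl⟩
        exact ⟨⟨j, hj.trans ht⟩, hj, rfl⟩
      · rintro ⟨i, hi, rfl⟩
        exact ⟨(i : ℕ), hi, rfl⟩
    rw [hset] at hx
    have hnot : (fun i : Fin T => x i) ⟨t, ht⟩ ∉
        Submodule.span ℝ ((fun i : Fin T => x i) '' {i : Fin T | (i : ℕ) < t}) :=
      hli.notMem_span_image (by simp)
    exact hnot hx
  -- main induction: ∀ t ≤ T, ∀ i < t, x i ⬝ᵥ θ t = y i
  have main : ∀ t, t ≤ T → ∀ i < t, x i ⬝ᵥ θ t = y i := by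
    intro t
    induction t with
    | zero => intro _ i hi; omega
    | succ t ih =>
      intro ht i hi
      have ht' : t < T := ht
      have hrt := hrec t ht'
      rw [hrt, dotProduct_sub, dotProduct_smul]
      rcases Nat.lt_succ_iff_lt_or_eq.mp hi with hi' | heq
      · rw [ih (le_of_lt ht) i hi', hP1 t (x t) i hi', smul_zero, sub_zero]
      · subst heq
        have hdot : x i ⬝ᵥ (P i *ᵥ x i) = (P i *ᵥ x i) ⬝ᵥ (P i *ᵥ x i) := by
          have h0' : (x i - P i *ᵥ x i) ⬝ᵥ (P i *ᵥ x i) = 0 :=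
            span_dot_zero x P hP1 i (x i) _ (hP2 i (x i))
          rw [sub_dotProduct] at h0'
          linarith
        rw [hdot]
        have := hPx i ht'
        rw [smul_eq_mul, div_mul_cancel₀ _ this]; ring
  intro t ht i hi
  exact main (t + 1) ht i hi
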